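/- On ⨂[ℂ]^3 V, define S₁₂ := (1/2 : ℂ) • (LinearMap.id + P_{(12)}) and A₂₃ := (1/2 : ℂ) • (LinearMap.id - P_{(23)}), where (12) and (23) are the transpositions swapping the indicated factors. Then the trace of the operator (4/3 : ℂ) • (S₁₂ ∘ₗ A₂₃ ∘ₗ S₁₂) equals N(N² − 1)/3, i.e. LinearMap.trace ℂ (⨂[ℂ]^3 V) ((4/3 : ℂ) • (S₁₂ ∘ₗ A₂₃ ∘ₗ S₁₂)) = ((N : ℂ) * ((N : ℂ)^2 - 1)) / 3. (This is the norm-squared of the corresponding mixed-symmetry MOLD singlet state, giving the normalization χ₂ = 3/(N(N²−1)).) -/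

import Mathlib

open scoped TensorProduct

/-- The permutation operator `P_σ` on the `m`-fold tensor power of `V = Fin N → ℂ`,
sending `v₁ ⊗ ⋯ ⊗ v_m` to `v_{σ⁻¹(1)} ⊗ ⋯ ⊗ v_{σ⁻¹(m)}`. -/
noncomputable def permOp (N m : ℕ) (σ : Equiv.Perm (Fin m)) :
    (⨂[ℂ] _ : Fin m, (Fin N → ℂ)) →ₗ[ℂ] ⨂[ℂ] _ : Fin m, (Fin N → ℂ) :=
  (PiTensorProduct.reindex ℂ (fun _ : Fin m => (Fin N → ℂ)) σ).toLinearMap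

/-- The symmetrizer `S₁₂` over the first two factors of `V^{⊗3}`. -/
noncomputable def S12 (N : ℕ) :
    (⨂[ℂ] _ : Fin 3, (Fin N → ℂ)) →ₗ[ℂ] ⨂[ℂ] _ : Fin 3, (Fin N → ℂ) :=
  (1 / 2 : ℂ) • (LinearMap.id + permOp N 3 (Equiv.swap 0 1))

/-- The antisymmetrizer `A₂₃` over the last two factors of `V^{⊗3}`. -/
noncomputable def A23 (N : ℕ) :
    (⨂[ℂ] _ : Fin 3, (Fin N → ℂ)) →ₗ[ℂ] ⨂[ℂ] _ : Fin 3, (Fin N → ℂ) :=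
  (1 / 2 : ℂ) • (LinearMap.id - permOp N 3 (Equiv.swap 1 2))

section MoldAux
open PiTensorProduct

variable (N m : ℕ)

noncomputable def bvec (f : Fin m → Fin N) : ⨂[ℂ] _ : Fin m, (Fin N → ℂ) :=
  tprod ℂ (fun i => Pi.single (f i) (1:ℂ))

noncomputable def phi : (⨂[ℂ] _ : Fin m, (Fin N → ℂ)) →ₗ[ℂ] ((Fin m → Fin N) → ℂ) :=
  PiTensorProduct.lift <| MultilinearMap.pi fun f =>
    (MultilinearMap.mkPiAlgebra ℂ (Fin m) ℂ).compLinearMap fun i => LinearMap.proj (f i)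

lemma phi_tprod (v : Fin m → Fin N → ℂ) (f : Fin m → Fin N) :
    phi N m (tprod ℂ v) f = ∏ i, v i (f i) := by
  simp [phi]

lemma phi_bvec (f f' : Fin m → Fin N) :
    phi N m (bvec N m f) f' = if f' = f then 1 else 0 := by
  rw [bvec, phi_tprod]
  by_cases h : f' = f
  · subst h; simp
  · rw [if_neg h]
    obtain ⟨i, hi⟩ := Function.ne_iff.mp h
    exact Finset.prod_eq_zero (Finset.mem_univ i) (by simp [Pi.single_apply, hi])

noncomputable def psi : ((Fin m → Fin N) → ℂ) →ₗ[ℂ] ⨂[ℂ] _ : Fin m, (Fin N → ℂ) :=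
  ∑ f : Fin m → Fin N, LinearMap.smulRight (LinearMap.proj f) (bvec N m f)

lemma psi_apply (g : (Fin m → Fin N) → ℂ) : psi N m g = ∑ f, g f • bvec N m f := by
  simp [psi]

lemma tprod_eq_sum (v : Fin m → Fin N → ℂ) :
    tprod ℂ v = ∑ f : Fin m → Fin N, (∏ i, v i (f i)) • bvec N m f := by
  have hv : v = fun i => ∑ j : Fin N, v i j • (Pi.single j (1:ℂ) : Fin N → ℂ) := by
    funext i k
    simp [Pi.single_apply, Finset.sum_apply, mul_ite]
  conv_lhs => rw [hv]
  rw [MultilinearMap.map_sum]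
  refine Finset.sum_congr rfl fun f _ => ?_
  rw [MultilinearMap.map_smul_univ]
  rfl

noncomputable def tensorEquivFun :
    (⨂[ℂ] _ : Fin m, (Fin N → ℂ)) ≃ₗ[ℂ] ((Fin m → Fin N) → ℂ) := by
  refine LinearEquiv.ofLinear (phi N m) (psi N m) ?_ ?_
  · apply LinearMap.ext; intro g; funext f'
    simp [psi_apply, phi_bvec, Finset.sum_apply, map_sum]
  · apply PiTensorProduct.ext
    apply MultilinearMap.ext; intro v
    simp only [LinearMap.compMultilinearMap_apply, LinearMap.comp_apply, LinearMap.id_apply]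
    rw [psi_apply]
    simp only [phi_tprod]
    exact (tprod_eq_sum N m v).symm

noncomputable def tensorBasis : Module.Basis (Fin m → Fin N) ℂ (⨂[ℂ] _ : Fin m, (Fin N → ℂ)) :=
  Module.Basis.ofEquivFun (tensorEquivFun N m)

lemma tensorBasis_apply (f : Fin m → Fin N) : tensorBasis N m f = bvec N m f := by
  classical
  rw [tensorBasis, Module.Basis.coe_ofEquivFun]
  simp only [tensorEquivFun, LinearEquiv.ofLinear_symm_apply, psi_apply]
  rw [Finset.sum_eq_single f]
  · simp
  · intro g _ hg
    simp [Pi.single_apply, hg]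
  · simp


lemma trace_eq (P : (⨂[ℂ] _ : Fin m, (Fin N → ℂ)) →ₗ[ℂ] ⨂[ℂ] _ : Fin m, (Fin N → ℂ)) :
    LinearMap.trace ℂ _ P = ∑ f : Fin m → Fin N, phi N m (P (bvec N m f)) f := by
  rw [LinearMap.trace_eq_matrix_trace ℂ (tensorBasis N m), Matrix.trace]
  refine Finset.sum_congr rfl fun f _ => ?_
  rw [Matrix.diag_apply, LinearMap.toMatrix_apply, tensorBasis_apply]
  rw [tensorBasis, Module.Basis.ofEquivFun_repr_apply]
  rfl

lemma permOp_bvec (σ : Equiv.Perm (Fin m)) (f : Fin m → Fin N) :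
    permOp N m σ (bvec N m f) = bvec N m (f ∘ σ.symm) := by
  simp only [permOp, bvec, LinearEquiv.coe_coe, PiTensorProduct.reindex_tprod]
  rfl

lemma trace_permOp (σ : Equiv.Perm (Fin m)) :
    LinearMap.trace ℂ _ (permOp N m σ)
      = ∑ f : Fin m → Fin N, if f ∘ σ = f then (1:ℂ) else 0 := by
  rw [trace_eq]
  refine Finset.sum_congr rfl fun f _ => ?_
  rw [permOp_bvec, phi_bvec]
  congr 1
  simp only [eq_iff_iff]
  constructor
  · intro h; funext x
    have := congrFun h (σ x); simpa using this
  · intro h; funext x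
    have := congrFun h (σ.symm x); simpa using this

def e3 (N : ℕ) : (Fin N × Fin N × Fin N) ≃ (Fin 3 → Fin N) where
  toFun p := ![p.1, p.2.1, p.2.2]
  invFun f := (f 0, f 1, f 2)
  left_inv p := rfl
  right_inv f := by
    funext i
    fin_cases i <;> rfl

lemma sum3 (σ : Equiv.Perm (Fin 3)) :
    (∑ f : Fin 3 → Fin N, if f ∘ σ = f then (1:ℂ) else 0)
      = ∑ a : Fin N, ∑ b : Fin N, ∑ c : Fin N,
          if (![a,b,c] : Fin 3 → Fin N) ∘ σ = ![a,b,c] then (1:ℂ) else 0 := by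
  rw [← Equiv.sum_comp (e3 N) (fun f => if f ∘ σ = f then (1:ℂ) else 0),
    Fintype.sum_prod_type]
  refine Finset.sum_congr rfl fun a _ => ?_
  rw [Fintype.sum_prod_type]
  rfl

lemma cond3 (σ : Equiv.Perm (Fin 3)) (a b c : Fin N) :
    ((![a,b,c] : Fin 3 → Fin N) ∘ σ = ![a,b,c])
      ↔ ((![a,b,c] : Fin 3 → Fin N) (σ 0) = a ∧ (![a,b,c] : Fin 3 → Fin N) (σ 1) = b
          ∧ (![a,b,c] : Fin 3 → Fin N) (σ 2) = c) := by
  rw [funext_iff, Fin.forall_fin_succ, Fin.forall_fin_succ, Fin.forall_fin_one]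
  rfl

lemma count_one :
    (∑ f : Fin 3 → Fin N, if f ∘ (1 : Equiv.Perm (Fin 3)) = f then (1:ℂ) else 0)
      = (N:ℂ)^3 := by
  simp [Fintype.card_fun]
  try ring

lemma count_sw01 :
    (∑ f : Fin 3 → Fin N, if f ∘ (Equiv.swap (0:Fin 3) 1) = f then (1:ℂ) else 0)
      = (N:ℂ)^2 := by
  rw [sum3]
  have h0 : (Equiv.swap (0:Fin 3) 1) 0 = 1 := by decide
  have h1 : (Equiv.swap (0:Fin 3) 1) 1 = 0 := by decide
  have h2 : (Equiv.swap (0:Fin 3) 1) 2 = 2 := by decide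
  simp only [cond3, h0, h1, h2, Matrix.cons_val_zero, Matrix.cons_val_one, Matrix.head_cons,
    Matrix.cons_val_two, Matrix.tail_cons]
  simp [Finset.sum_ite_eq, Finset.card_univ, and_self_iff, eq_comm]
  try ring

lemma count_sw12 :
    (∑ f : Fin 3 → Fin N, if f ∘ (Equiv.swap (1:Fin 3) 2) = f then (1:ℂ) else 0)
      = (N:ℂ)^2 := by
  rw [sum3]
  have h0 : (Equiv.swap (1:Fin 3) 2) 0 = 0 := by decide
  have h1 : (Equiv.swap (1:Fin 3) 2) 1 = 2 := by decide
  have h2 : (Equiv.swap (1:Fin 3) 2) 2 = 1 := by decide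
  simp only [cond3, h0, h1, h2, Matrix.cons_val_zero, Matrix.cons_val_one, Matrix.head_cons,
    Matrix.cons_val_two, Matrix.tail_cons]
  simp [Finset.sum_ite_eq, Finset.card_univ, and_self_iff, eq_comm]
  try ring

lemma count_sw02 :
    (∑ f : Fin 3 → Fin N, if f ∘ (Equiv.swap (0:Fin 3) 2) = f then (1:ℂ) else 0)
      = (N:ℂ)^2 := by
  rw [sum3]
  have h0 : (Equiv.swap (0:Fin 3) 2) 0 = 2 := by decide
  have h1 : (Equiv.swap (0:Fin 3) 2) 1 = 1 := by decide
  have h2 : (Equiv.swap (0:Fin 3) 2) 2 = 0 := by decide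
  simp only [cond3, h0, h1, h2, Matrix.cons_val_zero, Matrix.cons_val_one, Matrix.head_cons,
    Matrix.cons_val_two, Matrix.tail_cons]
  simp [Finset.sum_ite_eq, Finset.card_univ, and_self_iff, eq_comm]
  try ring

lemma count_c1 :
    (∑ f : Fin 3 → Fin N,
        if f ∘ ((Equiv.swap (0:Fin 3) 1) * (Equiv.swap (1:Fin 3) 2)) = f then (1:ℂ) else 0)
      = (N:ℂ) := by
  rw [sum3]
  have h0 : ((Equiv.swap (0:Fin 3) 1) * (Equiv.swap (1:Fin 3) 2)) 0 = 1 := by decide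
  have h1 : ((Equiv.swap (0:Fin 3) 1) * (Equiv.swap (1:Fin 3) 2)) 1 = 2 := by decide
  have h2 : ((Equiv.swap (0:Fin 3) 1) * (Equiv.swap (1:Fin 3) 2)) 2 = 0 := by decide
  simp only [cond3, h0, h1, h2, Matrix.cons_val_zero, Matrix.cons_val_one, Matrix.head_cons,
    Matrix.cons_val_two, Matrix.tail_cons]
  have hiff : ∀ a b c : Fin N, (b = a ∧ c = b ∧ a = c) ↔ (b = a ∧ c = b) := by
    intro a b c
    constructor
    · rintro ⟨x, y, z⟩; exact ⟨x, y⟩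
    · rintro ⟨x, y⟩; exact ⟨x, y, x.symm.trans y.symm⟩
  simp only [hiff]
  simp [Finset.sum_ite_eq, Finset.card_univ, ite_and]

lemma count_c2 :
    (∑ f : Fin 3 → Fin N,
        if f ∘ ((Equiv.swap (1:Fin 3) 2) * (Equiv.swap (0:Fin 3) 1)) = f then (1:ℂ) else 0)
      = (N:ℂ) := by
  rw [sum3]
  have h0 : ((Equiv.swap (1:Fin 3) 2) * (Equiv.swap (0:Fin 3) 1)) 0 = 2 := by decide
  have h1 : ((Equiv.swap (1:Fin 3) 2) * (Equiv.swap (0:Fin 3) 1)) 1 = 0 := by decide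
  have h2 : ((Equiv.swap (1:Fin 3) 2) * (Equiv.swap (0:Fin 3) 1)) 2 = 1 := by decide
  simp only [cond3, h0, h1, h2, Matrix.cons_val_zero, Matrix.cons_val_one, Matrix.head_cons,
    Matrix.cons_val_two, Matrix.tail_cons]
  have hiff : ∀ a b c : Fin N, (c = a ∧ a = b ∧ b = c) ↔ (c = a ∧ a = b) := by
    intro a b c
    constructor
    · rintro ⟨x, y, z⟩; exact ⟨x, y⟩
    · rintro ⟨x, y⟩; exact ⟨x, y, y.symm.trans x.symm⟩
  simp only [hiff]
  simp [Finset.sum_ite_eq, Finset.card_univ, ite_and]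

lemma permOp_mul (σ τ : Equiv.Perm (Fin m)) :
    permOp N m σ ∘ₗ permOp N m τ = permOp N m (σ * τ) := by
  have : (σ * τ : Equiv.Perm (Fin m)) = τ.trans σ := rfl
  rw [this, permOp, permOp, permOp, ← PiTensorProduct.reindex_trans τ σ]
  rfl

lemma permOp_one : permOp N m (1 : Equiv.Perm (Fin m)) = LinearMap.id := by
  have : (1 : Equiv.Perm (Fin m)) = Equiv.refl (Fin m) := rfl
  rw [permOp, this, PiTensorProduct.reindex_refl]
  rfl

/-- The trace of the mixed-symmetry MOLD operator `(4/3) S₁₂ A₂₃ S₁₂` on `V^{⊗3}` equals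
`N (N² - 1) / 3`, the dimension of the mixed-symmetry representation. -/
theorem trace_mold_mixed (N : ℕ) (hN : 0 < N) :
    LinearMap.trace ℂ (⨂[ℂ] _ : Fin 3, (Fin N → ℂ))
        ((4 / 3 : ℂ) • (S12 N ∘ₗ A23 N ∘ₗ S12 N))
      = ((N : ℂ) * ((N : ℂ) ^ 2 - 1)) / 3 := by
  have haa : (Equiv.swap (0:Fin 3) 1) * (Equiv.swap (0:Fin 3) 1) = 1 := by decide
  have haba : (Equiv.swap (0:Fin 3) 1) * ((Equiv.swap (1:Fin 3) 2) * (Equiv.swap (0:Fin 3) 1))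
      = Equiv.swap 0 2 := by decide
  have t1 : LinearMap.trace ℂ _ (permOp N 3 1) = (N:ℂ)^3 := by
    rw [trace_permOp]; exact count_one N
  have ta : LinearMap.trace ℂ _ (permOp N 3 (Equiv.swap 0 1)) = (N:ℂ)^2 := by
    rw [trace_permOp]; exact count_sw01 N
  have tb : LinearMap.trace ℂ _ (permOp N 3 (Equiv.swap 1 2)) = (N:ℂ)^2 := by
    rw [trace_permOp]; exact count_sw12 N
  have tc : LinearMap.trace ℂ _ (permOp N 3 (Equiv.swap 0 2)) = (N:ℂ)^2 := by
    rw [trace_permOp]; exact count_sw02 N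
  have tab : LinearMap.trace ℂ _ (permOp N 3 ((Equiv.swap (0:Fin 3) 1) * (Equiv.swap (1:Fin 3) 2)))
      = (N:ℂ) := by
    rw [trace_permOp]; exact count_c1 N
  have tba : LinearMap.trace ℂ _ (permOp N 3 ((Equiv.swap (1:Fin 3) 2) * (Equiv.swap (0:Fin 3) 1)))
      = (N:ℂ) := by
    rw [trace_permOp]; exact count_c2 N
  rw [map_smul, smul_eq_mul, S12, A23]
  simp only [LinearMap.comp_add, LinearMap.add_comp, LinearMap.comp_sub, LinearMap.sub_comp,
    LinearMap.smul_comp, LinearMap.comp_smul, LinearMap.comp_id, LinearMap.id_comp,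
    permOp_mul, haa, haba, permOp_one, map_add, map_sub, map_smul, smul_eq_mul]
  have tsub : ∀ x y : (⨂[ℂ] _ : Fin 3, (Fin N → ℂ)) →ₗ[ℂ] (⨂[ℂ] _ : Fin 3, (Fin N → ℂ)),
      LinearMap.trace ℂ _ (x - y) = LinearMap.trace ℂ _ x - LinearMap.trace ℂ _ y :=
    fun x y => map_sub _ x y
  have tadd : ∀ x y : (⨂[ℂ] _ : Fin 3, (Fin N → ℂ)) →ₗ[ℂ] (⨂[ℂ] _ : Fin 3, (Fin N → ℂ)),
      LinearMap.trace ℂ _ (x + y) = LinearMap.trace ℂ _ x + LinearMap.trace ℂ _ y :=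
    fun x y => map_add _ x y
  have tsmul : ∀ (c : ℂ) (x : (⨂[ℂ] _ : Fin 3, (Fin N → ℂ)) →ₗ[ℂ] (⨂[ℂ] _ : Fin 3, (Fin N → ℂ))),
      LinearMap.trace ℂ _ (c • x) = c * LinearMap.trace ℂ _ x :=
    fun c x => by rw [map_smul, smul_eq_mul]
  simp only [tsub, tadd, tsmul]
  rw [ta, tb, tc, tab, tba]
  have hid : LinearMap.trace ℂ (⨂[ℂ] _ : Fin 3, (Fin N → ℂ)) LinearMap.id = (N:ℂ)^3 := by
    rw [← permOp_one N 3, t1]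
  rw [hid]
  ring

end MoldAux
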